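/- Assume model (1.1), and let B̄ ∈ {0,1}^{q×s} be an arbitrary membership matrix with all s clusters nonempty. With W̄ = B̄ (B̄ᵀ B̄)^{-2} B̄ᵀ / s and G = Bᵀ B̄ (B̄ᵀ B̄)^{-1}, the weighted covariance matrix satisfies Σ_{p,W̄} = E(X W̄ Xᵀ) = (1/s) · A E(Z G Gᵀ Zᵀ) Aᵀ + E(Γ W̄ Γᵀ), and E(Γ W̄ Γᵀ) is diagonal. -/

import Mathlib

open MeasureTheory ProbabilityTheory Matrix BigOperators Finset
open scoped Classical

noncomputable section

instance {m n : Type*} : MeasurableSpace (Matrix m n ℝ) :=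
  inferInstanceAs (MeasurableSpace (m → n → ℝ))

/-- Entrywise expectation of a random matrix. -/
def matExp {Ω : Type*} [MeasurableSpace Ω] (μ : Measure Ω) {m n : ℕ}
    (X : Ω → Matrix (Fin m) (Fin n) ℝ) : Matrix (Fin m) (Fin n) ℝ :=
  Matrix.of fun i j => ∫ ω, X ω i j ∂μ

/-- A membership matrix: binary, every row has exactly one 1, every column is nonzero. -/
def IsMembership {p K : ℕ} (A : Matrix (Fin p) (Fin K) ℝ) : Prop :=
  (∀ i k, A i k = 0 ∨ A i k = 1) ∧ (∀ i, ∃! k, A i k = 1) ∧ (∀ k, ∃ i, A i k = 1)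

/-- `a` and `b` belong to the same cluster encoded by the membership matrix `A`. -/
def SameCluster {p K : ℕ} (A : Matrix (Fin p) (Fin K) ℝ) (a b : Fin p) : Prop :=
  ∃ k, A a k = 1 ∧ A b k = 1

section Aux

variable {Ω : Type} [MeasurableSpace Ω] {μ : Measure Ω}

/-- Entry of a quadratic form `P * W * Qᵀ`. -/
lemma quad_entry {p m n : ℕ} (P : Matrix (Fin p) (Fin n) ℝ) (W : Matrix (Fin n) (Fin n) ℝ)
    (Q : Matrix (Fin m) (Fin n) ℝ) (a : Fin p) (b : Fin m) :
    (P * W * Qᵀ) a b = ∑ x, ∑ c, W c x * (P a c * Q b x) := by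
  simp only [Matrix.mul_apply, Matrix.transpose_apply, Finset.sum_mul]
  exact Finset.sum_congr rfl fun x _ => Finset.sum_congr rfl fun c _ => by ring

lemma integrable_quad {p m n : ℕ} {P : Ω → Matrix (Fin p) (Fin n) ℝ}
    {Q : Ω → Matrix (Fin m) (Fin n) ℝ} (W : Matrix (Fin n) (Fin n) ℝ)
    (hint : ∀ i c j d, Integrable (fun ω => P ω i c * Q ω j d) μ) (a : Fin p) (b : Fin m) :
    Integrable (fun ω => (P ω * W * (Q ω)ᵀ) a b) μ := by
  simp only [quad_entry]
  exact integrable_finset_sum _ fun x _ =>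
    integrable_finset_sum _ fun c _ => ((hint a c b x).const_mul _)

lemma matExp_quad {p m n : ℕ} {P : Ω → Matrix (Fin p) (Fin n) ℝ}
    {Q : Ω → Matrix (Fin m) (Fin n) ℝ} (W : Matrix (Fin n) (Fin n) ℝ)
    (hint : ∀ i c j d, Integrable (fun ω => P ω i c * Q ω j d) μ) (a : Fin p) (b : Fin m) :
    matExp μ (fun ω => P ω * W * (Q ω)ᵀ) a b
      = ∑ x, ∑ c, W c x * ∫ ω, P ω a c * Q ω b x ∂μ := by
  show (∫ ω, (P ω * W * (Q ω)ᵀ) a b ∂μ) = _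
  simp only [quad_entry]
  rw [integral_finset_sum _ fun x _ =>
    integrable_finset_sum _ fun c _ => ((hint a c b x).const_mul _)]
  refine Finset.sum_congr rfl fun x _ => ?_
  rw [integral_finset_sum _ fun c _ => ((hint a c b x).const_mul _)]
  exact Finset.sum_congr rfl fun c _ => integral_const_mul _ _

lemma matExp_smul {m n : ℕ} (c : ℝ) (F : Ω → Matrix (Fin m) (Fin n) ℝ) :
    matExp μ (fun ω => c • F ω) = c • matExp μ F := by
  ext a b
  show (∫ ω, (c • F ω) a b ∂μ) = c • (∫ ω, F ω a b ∂μ)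
  simp only [Matrix.smul_apply, smul_eq_mul]
  exact integral_const_mul _ _

lemma matExp_add {m n : ℕ} {F G : Ω → Matrix (Fin m) (Fin n) ℝ}
    (hF : ∀ a b, Integrable (fun ω => F ω a b) μ)
    (hG : ∀ a b, Integrable (fun ω => G ω a b) μ) :
    matExp μ (fun ω => F ω + G ω) = matExp μ F + matExp μ G := by
  ext a b
  show (∫ ω, (F ω + G ω) a b ∂μ) = (∫ ω, F ω a b ∂μ) + ∫ ω, G ω a b ∂μ
  simp only [Matrix.add_apply]
  exact integral_add (hF a b) (hG a b)

lemma matExp_conj {m n p' q' : ℕ} {F : Ω → Matrix (Fin m) (Fin n) ℝ}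
    (C : Matrix (Fin p') (Fin m) ℝ) (D : Matrix (Fin n) (Fin q') ℝ)
    (hF : ∀ a b, Integrable (fun ω => F ω a b) μ) :
    matExp μ (fun ω => C * F ω * D) = C * matExp μ F * D := by
  have key : ∀ (M : Matrix (Fin m) (Fin n) ℝ) (a : Fin p') (b : Fin q'),
      (C * M * D) a b = ∑ v, ∑ u, (C a u * D v b) * M u v := by
    intro M a b
    simp only [Matrix.mul_apply, Finset.sum_mul]
    exact Finset.sum_congr rfl fun v _ => Finset.sum_congr rfl fun u _ => by ring
  ext a b
  show (∫ ω, (C * F ω * D) a b ∂μ) = (C * matExp μ F * D) a b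
  rw [key]
  simp only [key]
  rw [integral_finset_sum _ fun v _ =>
    integrable_finset_sum _ fun u _ => ((hF u v).const_mul _)]
  refine Finset.sum_congr rfl fun v _ => ?_
  rw [integral_finset_sum _ fun u _ => ((hF u v).const_mul _)]
  refine Finset.sum_congr rfl fun u _ => ?_
  rw [integral_const_mul]
  rfl

/-- Entry of `A * Z * Bᵀ` as a linear combination of the entries of `Z`. -/
lemma memb_entry {p q K₁ K₂ : ℕ} (A : Matrix (Fin p) (Fin K₁) ℝ)
    (B : Matrix (Fin q) (Fin K₂) ℝ) (Z : Matrix (Fin K₁) (Fin K₂) ℝ)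
    (i : Fin p) (c : Fin q) :
    (A * Z * Bᵀ) i c = ∑ t : Fin K₁ × Fin K₂, (A i t.1 * B c t.2) * Z t.1 t.2 := by
  rw [Fintype.sum_prod_type]
  simp only [Matrix.mul_apply, Matrix.transpose_apply, Finset.sum_mul]
  rw [Finset.sum_comm]
  exact Finset.sum_congr rfl fun j _ => Finset.sum_congr rfl fun k _ => by ring

end Aux

/-- Under model (1.1), for an arbitrary membership matrix `B̄` with
weight `W̄ = B̄(B̄ᵀB̄)^{-2}B̄ᵀ/s` and `G = Bᵀ B̄ (B̄ᵀB̄)^{-1}`,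
`Σ_{p,W̄} = (1/s) A E(Z G Gᵀ Zᵀ) Aᵀ + E(Γ W̄ Γᵀ)`, and `E(Γ W̄ Γᵀ)` is diagonal. -/
theorem general_weight_decomposition
    {Ω : Type} [MeasurableSpace Ω] (μ : Measure Ω) [IsProbabilityMeasure μ]
    {p q K₁ K₂ s : ℕ}
    (A : Matrix (Fin p) (Fin K₁) ℝ) (B : Matrix (Fin q) (Fin K₂) ℝ)
    (Bbar : Matrix (Fin q) (Fin s) ℝ)
    (Z : Ω → Matrix (Fin K₁) (Fin K₂) ℝ) (Γ X : Ω → Matrix (Fin p) (Fin q) ℝ)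
    (hA : IsMembership A) (hB : IsMembership B) (hBbar : IsMembership Bbar)
    (hmodel : ∀ ω, X ω = A * Z ω * Bᵀ + Γ ω)
    (hZmeas : Measurable Z) (hΓmeas : Measurable Γ)
    (hZmean : ∀ j k, ∫ ω, Z ω j k ∂μ = 0)
    (hΓmean : ∀ a b, ∫ ω, Γ ω a b ∂μ = 0)
    (hZint : ∀ j k j' k', Integrable (fun ω => Z ω j k * Z ω j' k') μ)
    (hΓint : ∀ a b a' b', Integrable (fun ω => Γ ω a b * Γ ω a' b') μ)
    (hZΓint : ∀ j k a b, Integrable (fun ω => Z ω j k * Γ ω a b) μ)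
    (hΓindep : iIndepFun
      (fun (ij : Fin p × Fin q) ω => Γ ω ij.1 ij.2) μ)
    (hindep : IndepFun Z Γ μ) :
    matExp μ (fun ω =>
        X ω * ((1/(s:ℝ)) • (Bbar * ((Bbarᵀ * Bbar)^2)⁻¹ * Bbarᵀ)) * (X ω)ᵀ)
      = (1/(s:ℝ)) •
          (A * matExp μ (fun ω =>
              Z ω * (Bᵀ * Bbar * (Bbarᵀ * Bbar)⁻¹)
                * (Bᵀ * Bbar * (Bbarᵀ * Bbar)⁻¹)ᵀ * (Z ω)ᵀ) * Aᵀ)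
        + matExp μ (fun ω =>
            Γ ω * ((1/(s:ℝ)) • (Bbar * ((Bbarᵀ * Bbar)^2)⁻¹ * Bbarᵀ)) * (Γ ω)ᵀ) ∧
    (matExp μ (fun ω =>
        Γ ω * ((1/(s:ℝ)) • (Bbar * ((Bbarᵀ * Bbar)^2)⁻¹ * Bbarᵀ)) * (Γ ω)ᵀ)).IsDiag := by
  set W₀ : Matrix (Fin q) (Fin q) ℝ := Bbar * ((Bbarᵀ * Bbar)^2)⁻¹ * Bbarᵀ with hW₀
  set G : Matrix (Fin K₂) (Fin s) ℝ := Bᵀ * Bbar * (Bbarᵀ * Bbar)⁻¹ with hG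
  set S : Ω → Matrix (Fin p) (Fin q) ℝ := fun ω => A * Z ω * Bᵀ with hS
  -- measurability of entries
  have hZe : ∀ j k, Measurable fun ω => Z ω j k := fun j k =>
    (measurable_pi_apply k).comp ((measurable_pi_apply j).comp hZmeas)
  have hΓe : ∀ a b, Measurable fun ω => Γ ω a b := fun a b =>
    (measurable_pi_apply b).comp ((measurable_pi_apply a).comp hΓmeas)
  -- cross expectations vanish
  have hZΓ0 : ∀ j k a b, (∫ ω, Z ω j k * Γ ω a b ∂μ) = 0 := by
    intro j k a b
    have hcomp : IndepFun (fun ω => Z ω j k) (fun ω => Γ ω a b) μ := by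
      have hφ : Measurable fun M : Matrix (Fin K₁) (Fin K₂) ℝ => M j k :=
        (measurable_pi_apply j).eval
      have hψ : Measurable fun M : Matrix (Fin p) (Fin q) ℝ => M a b :=
        (measurable_pi_apply a).eval
      exact hindep.comp hφ hψ
    rw [hcomp.integral_fun_mul_eq_mul_integral (hZe j k).aestronglyMeasurable (hΓe a b).aestronglyMeasurable,
      hZmean, zero_mul]
  have hΓΓ0 : ∀ (a c b x), a ≠ b → (∫ ω, Γ ω a c * Γ ω b x ∂μ) = 0 := by
    intro a c b x hab
    have hne : ((a, c) : Fin p × Fin q) ≠ (b, x) := fun h => hab (congrArg Prod.fst h)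
    have hpair := hΓindep.indepFun hne
    rw [hpair.integral_fun_mul_eq_mul_integral (hΓe a c).aestronglyMeasurable (hΓe b x).aestronglyMeasurable,
      hΓmean, zero_mul]
  -- pairwise integrability
  have hSS : ∀ i c j d, Integrable (fun ω => S ω i c * S ω j d) μ := by
    intro i c j d
    have heq : (fun ω => S ω i c * S ω j d)
        = fun ω => ∑ t : Fin K₁ × Fin K₂, ∑ t' : Fin K₁ × Fin K₂,
            ((A i t.1 * B c t.2) * (A j t'.1 * B d t'.2))
              * (Z ω t.1 t.2 * Z ω t'.1 t'.2) := by
      funext ω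
      rw [hS]
      simp only
      rw [memb_entry, memb_entry, Finset.sum_mul_sum]
      exact Finset.sum_congr rfl fun t _ => Finset.sum_congr rfl fun t' _ => by ring
    rw [heq]
    exact integrable_finset_sum _ fun t _ => integrable_finset_sum _ fun t' _ =>
      ((hZint t.1 t.2 t'.1 t'.2).const_mul _)
  have hSΓ : ∀ i c j d, Integrable (fun ω => S ω i c * Γ ω j d) μ := by
    intro i c j d
    have heq : (fun ω => S ω i c * Γ ω j d)
        = fun ω => ∑ t : Fin K₁ × Fin K₂,
            (A i t.1 * B c t.2) * (Z ω t.1 t.2 * Γ ω j d) := by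
      funext ω
      rw [hS]
      simp only
      rw [memb_entry, Finset.sum_mul]
      exact Finset.sum_congr rfl fun t _ => by ring
    rw [heq]
    exact integrable_finset_sum _ fun t _ => ((hZΓint t.1 t.2 j d).const_mul _)
  have hΓS : ∀ i c j d, Integrable (fun ω => Γ ω i c * S ω j d) μ := by
    intro i c j d
    have heq : (fun ω => Γ ω i c * S ω j d) = fun ω => S ω j d * Γ ω i c := by
      funext ω; ring
    rw [heq]
    exact hSΓ j d i c
  -- cross-term integrals vanish
  have hSΓ0 : ∀ i c j d, (∫ ω, S ω i c * Γ ω j d ∂μ) = 0 := by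
    intro i c j d
    have heq : (fun ω => S ω i c * Γ ω j d)
        = fun ω => ∑ t : Fin K₁ × Fin K₂,
            (A i t.1 * B c t.2) * (Z ω t.1 t.2 * Γ ω j d) := by
      funext ω
      rw [hS]
      simp only
      rw [memb_entry, Finset.sum_mul]
      exact Finset.sum_congr rfl fun t _ => by ring
    rw [heq, integral_finset_sum _ fun t _ => ((hZΓint t.1 t.2 j d).const_mul _)]
    refine Finset.sum_eq_zero fun t _ => ?_
    rw [integral_const_mul, hZΓ0, mul_zero]
  have hΓS0 : ∀ i c j d, (∫ ω, Γ ω i c * S ω j d ∂μ) = 0 := by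
    intro i c j d
    have heq : (fun ω => Γ ω i c * S ω j d) = fun ω => S ω j d * Γ ω i c := by
      funext ω; ring
    rw [heq]
    exact hSΓ0 j d i c
  -- key algebraic identity : Bᵀ W₀ B = G Gᵀ
  have hGG : Bᵀ * W₀ * B = G * Gᵀ := by
    have h2 : ((Bbarᵀ * Bbar)^2)⁻¹ = (Bbarᵀ * Bbar)⁻¹ * (Bbarᵀ * Bbar)⁻¹ := by
      rw [sq, Matrix.mul_inv_rev]
    rw [hW₀, hG, h2]
    simp only [Matrix.transpose_mul, Matrix.transpose_nonsing_inv, Matrix.transpose_transpose,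
      Matrix.mul_assoc]
  -- decomposition of S W₀ Sᵀ
  have hE1 : (fun ω => S ω * W₀ * (S ω)ᵀ)
      = fun ω => A * (Z ω * (G * Gᵀ) * (Z ω)ᵀ) * Aᵀ := by
    funext ω
    rw [← hGG, hS]
    simp only [Matrix.transpose_mul, Matrix.transpose_transpose, Matrix.mul_assoc]
  -- expected matrices
  have hZMint : ∀ a b, Integrable (fun ω => (Z ω * (G * Gᵀ) * (Z ω)ᵀ) a b) μ :=
    integrable_quad (G * Gᵀ) hZint
  have hE1' : matExp μ (fun ω => S ω * W₀ * (S ω)ᵀ)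
      = A * matExp μ (fun ω => Z ω * (G * Gᵀ) * (Z ω)ᵀ) * Aᵀ := by
    rw [hE1]
    exact matExp_conj A Aᵀ hZMint
  have hE2 : matExp μ (fun ω => S ω * W₀ * (Γ ω)ᵀ) = 0 := by
    ext a b
    rw [matExp_quad W₀ hSΓ]
    simp [hSΓ0]
  have hE3 : matExp μ (fun ω => Γ ω * W₀ * (S ω)ᵀ) = 0 := by
    ext a b
    rw [matExp_quad W₀ hΓS]
    simp [hΓS0]
  -- split of X W₀ Xᵀ
  have hsplit : (fun ω => X ω * W₀ * (X ω)ᵀ)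
      = fun ω => (S ω * W₀ * (S ω)ᵀ + S ω * W₀ * (Γ ω)ᵀ)
          + (Γ ω * W₀ * (S ω)ᵀ + Γ ω * W₀ * (Γ ω)ᵀ) := by
    funext ω
    have hSω : A * Z ω * Bᵀ = S ω := rfl
    rw [hmodel ω, hSω]
    rw [Matrix.transpose_add, Matrix.add_mul, Matrix.add_mul, Matrix.mul_add, Matrix.mul_add]
  have hint1 : ∀ a b, Integrable (fun ω =>
      (S ω * W₀ * (S ω)ᵀ + S ω * W₀ * (Γ ω)ᵀ) a b) μ := by
    intro a b
    simp only [Matrix.add_apply]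
    exact (integrable_quad W₀ hSS a b).add (integrable_quad W₀ hSΓ a b)
  have hint2 : ∀ a b, Integrable (fun ω =>
      (Γ ω * W₀ * (S ω)ᵀ + Γ ω * W₀ * (Γ ω)ᵀ) a b) μ := by
    intro a b
    simp only [Matrix.add_apply]
    exact (integrable_quad W₀ hΓS a b).add (integrable_quad W₀ hΓint a b)
  have hmain : matExp μ (fun ω => X ω * W₀ * (X ω)ᵀ)
      = A * matExp μ (fun ω => Z ω * (G * Gᵀ) * (Z ω)ᵀ) * Aᵀ
        + matExp μ (fun ω => Γ ω * W₀ * (Γ ω)ᵀ) := by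
    rw [hsplit, matExp_add hint1 hint2,
      matExp_add (integrable_quad W₀ hSS) (integrable_quad W₀ hSΓ),
      matExp_add (integrable_quad W₀ hΓS) (integrable_quad W₀ hΓint),
      hE1', hE2, hE3, add_zero, zero_add]
  -- handle the scalar 1/s
  have hsmulX : (fun ω => X ω * ((1/(s:ℝ)) • W₀) * (X ω)ᵀ)
      = fun ω => (1/(s:ℝ)) • (X ω * W₀ * (X ω)ᵀ) := by
    funext ω
    rw [Matrix.mul_smul, Matrix.smul_mul]
  have hsmulΓ : (fun ω => Γ ω * ((1/(s:ℝ)) • W₀) * (Γ ω)ᵀ)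
      = fun ω => (1/(s:ℝ)) • (Γ ω * W₀ * (Γ ω)ᵀ) := by
    funext ω
    rw [Matrix.mul_smul, Matrix.smul_mul]
  have hZform : (fun ω => Z ω * (Bᵀ * Bbar * (Bbarᵀ * Bbar)⁻¹)
        * (Bᵀ * Bbar * (Bbarᵀ * Bbar)⁻¹)ᵀ * (Z ω)ᵀ)
      = fun ω => Z ω * (G * Gᵀ) * (Z ω)ᵀ := by
    funext ω
    rw [hG, Matrix.mul_assoc (Z ω) G Gᵀ]
  constructor
  · rw [hsmulX, matExp_smul, hmain, hsmulΓ, matExp_smul, hZform, smul_add]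
  · rw [hsmulΓ, matExp_smul]
    intro a b hab
    rw [Matrix.smul_apply]
    have : matExp μ (fun ω => Γ ω * W₀ * (Γ ω)ᵀ) a b = 0 := by
      rw [matExp_quad W₀ hΓint]
      refine Finset.sum_eq_zero fun x _ => Finset.sum_eq_zero fun c _ => ?_
      rw [hΓΓ0 a c b x hab, mul_zero]
    rw [this, smul_zero]
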